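/- Let {λ_i}_{i≥1} be a sequence of positive integers satisfying λ_1 + ... + λ_k ≥ λ_{k+1} for all k ≥ 1, and let {X_i}_{i≥1} be independent random variables with X_i ∼ Poisson(λ_i). Then for every k ≥ 1, P(Σ_{i=1}^k X_i ≥ Σ_{i=1}^k λ_i) ≥ P(Σ_{i=1}^{k+1} X_i ≥ Σ_{i=1}^{k+1} λ_i). -/

import Mathlib

open MeasureTheory ProbabilityTheory
open scoped NNReal

section Aux

open Finset
open scoped Nat ENNReal

/-! ### Analytic part : partial sums of the exponential series -/

noncomputable def Efun (n : ℕ) : ℝ := ∑ j ∈ Finset.range (n+1), 1 / (j ! : ℝ)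
noncomputable def Tfun (n : ℕ) : ℝ := Real.exp 1 - Efun n

lemma Efun_succ (n : ℕ) : Efun (n+1) = Efun n + 1 / ((n+1)! : ℝ) := by
  simp [Efun, Finset.sum_range_succ]

lemma Tfun_succ (n : ℕ) : Tfun n = Tfun (n+1) + 1 / ((n+1)! : ℝ) := by
  simp [Tfun, Efun_succ]; ring

lemma Tfun_nonneg (n : ℕ) : 0 ≤ Tfun n := by
  have h := Real.sum_le_exp_of_nonneg (x := 1) zero_le_one (n+1)
  simp only [one_pow] at h
  simpa [Tfun, Efun, sub_nonneg] using h

lemma Tfun_le (n : ℕ) : Tfun n ≤ ((n:ℝ)+2) / (((n+1)! : ℝ) * ((n:ℝ)+1)) := by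
  have h := Real.exp_bound (x := 1) (by norm_num) (n := n+1) (Nat.succ_pos n)
  simp only [one_pow, abs_one, one_mul] at h
  calc Tfun n ≤ |Real.exp 1 - ∑ m ∈ range (n+1), 1 / (m ! : ℝ)| := by
        rw [Tfun, Efun]; exact le_abs_self _
    _ ≤ (((n+1).succ : ℕ) : ℝ) / (((n+1)! : ℝ) * ((n+1 : ℕ) : ℝ)) := h
    _ = ((n:ℝ)+2) / (((n+1)! : ℝ) * ((n:ℝ)+1)) := by push_cast; ring

lemma fact_pos' (n : ℕ) : (0:ℝ) < (n ! : ℝ) := by exact_mod_cast Nat.factorial_pos n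

lemma fact_step (n : ℕ) : ((n+1+1)! : ℝ) = ((n:ℝ)+2) * ((n+1)! : ℝ) := by
  rw [Nat.factorial_succ (n+1)]; push_cast; ring

lemma Tsum_id (n : ℕ) : ∑ r ∈ range n, Tfun (r+1) = 1 - Tfun n + ((n:ℝ)+1) * Tfun (n+1) := by
  induction n with
  | zero =>
    have h0 : Tfun 0 = Tfun 1 + 1 := by simpa using Tfun_succ 0
    simp [h0]
  | succ n ih =>
    rw [Finset.sum_range_succ, ih, Tfun_succ n, Tfun_succ (n+1), fact_step n]
    have hf := fact_pos' (n+1)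
    field_simp
    push_cast; ring

lemma Tsum_le_one (n : ℕ) : ∑ r ∈ range n, Tfun (r+1) ≤ 1 := by
  rw [Tsum_id]
  have h1 := Tfun_succ n
  have hf := fact_pos' (n+1)
  have key : (n:ℝ) * Tfun (n+1) ≤ 1 / ((n+1)! : ℝ) := by
    have hb := Tfun_le (n+1)
    rw [fact_step n] at hb
    have hn0 : (0:ℝ) ≤ (n:ℝ) := Nat.cast_nonneg n
    calc (n:ℝ) * Tfun (n+1)
        ≤ (n:ℝ) * ((((n+1):ℕ):ℝ)+2) / ((((n:ℝ)+2) * ((n+1)! : ℝ)) * ((((n+1):ℕ):ℝ)+1)) := by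
          rw [mul_div_assoc]; exact mul_le_mul_of_nonneg_left hb hn0
      _ ≤ 1 / ((n+1)! : ℝ) := by
          rw [div_le_div_iff₀ (by positivity) hf]
          push_cast
          nlinarith [hf]
  linarith [key, h1]

lemma fact_le_pow_mul {k n : ℕ} (h : k ≤ n) : n ! ≤ k ! * n ^ (n - k) := by
  induction n, h using Nat.le_induction with
  | base => simp
  | succ n hkn ih =>
    have h1 : (n+1)! = (n+1) * n ! := Nat.factorial_succ n
    have h2 : n ^ (n-k) ≤ (n+1) ^ (n-k) := Nat.pow_le_pow_left (Nat.le_succ n) _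
    have h3 : n + 1 - k = (n - k) + 1 := by omega
    calc (n+1)! = (n+1) * n ! := h1
      _ ≤ (n+1) * (k ! * n ^ (n-k)) := Nat.mul_le_mul_left _ ih
      _ ≤ (n+1) * (k ! * (n+1) ^ (n-k)) := by
          exact Nat.mul_le_mul_left _ (Nat.mul_le_mul_left _ h2)
      _ = k ! * (n+1) ^ (n+1-k) := by rw [h3, pow_succ]; ring

lemma coeff_le {k n : ℕ} (h : k ≤ n) : (n:ℝ)^k / (k ! : ℝ) ≤ (n:ℝ)^n / (n ! : ℝ) := by
  rcases Nat.eq_zero_or_pos n with hn | hn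
  · subst hn; interval_cases k; simp
  have hk : (0:ℝ) < (k ! : ℝ) := by exact_mod_cast Nat.factorial_pos k
  have hnf : (0:ℝ) < (n ! : ℝ) := by exact_mod_cast Nat.factorial_pos n
  rw [div_le_div_iff₀ hk hnf]
  have hpow : (n:ℝ)^n = (n:ℝ)^k * (n:ℝ)^(n-k) := by
    rw [← pow_add]; congr 1; omega
  have hc : ((n !: ℕ):ℝ) ≤ (k ! : ℝ) * (n:ℝ)^(n-k) := by
    have := fact_le_pow_mul h
    exact_mod_cast this
  calc (n:ℝ)^k * (n ! : ℝ) ≤ (n:ℝ)^k * ((k ! : ℝ) * (n:ℝ)^(n-k)) :=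
        mul_le_mul_of_nonneg_left hc (pow_nonneg (Nat.cast_nonneg n) k)
    _ = (n:ℝ)^n * (k ! : ℝ) := by rw [hpow]; ring

lemma B_expand (n : ℕ) : ∑ m ∈ range (n+1), ((n:ℝ)+1)^m / (m ! : ℝ)
    = ∑ k ∈ range (n+1), (n:ℝ)^k / (k ! : ℝ) * Efun (n-k) := by
  have e1 : ∀ m ∈ range (n+1), ((n:ℝ)+1)^m / (m ! : ℝ)
      = ∑ k ∈ range (m+1), (n:ℝ)^k / ((k ! : ℝ) * (((m-k) !) : ℝ)) := by
    intro m _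
    rw [add_pow]
    rw [Finset.sum_div]
    refine Finset.sum_congr rfl (fun k hk => ?_)
    have hkm : k ≤ m := Nat.lt_succ_iff.mp (Finset.mem_range.mp hk)
    rw [Nat.cast_choose ℝ hkm]
    have h1 : (k ! : ℝ) ≠ 0 := by exact_mod_cast (Nat.factorial_pos k).ne'
    have h2 : (((m-k)!) : ℝ) ≠ 0 := by exact_mod_cast (Nat.factorial_pos (m-k)).ne'
    have h3 : (m ! : ℝ) ≠ 0 := by exact_mod_cast (Nat.factorial_pos m).ne'
    field_simp
    ring
  rw [Finset.sum_congr rfl e1]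
  have swap := Finset.sum_Ico_Ico_comm 0 (n+1)
    (fun k m => (n:ℝ)^k / ((k ! : ℝ) * (((m-k) !) : ℝ)))
  simp only [← Finset.range_eq_Ico] at swap
  rw [← swap]
  refine Finset.sum_congr rfl (fun k hk => ?_)
  have hkn : k ≤ n := Nat.lt_succ_iff.mp (Finset.mem_range.mp hk)
  rw [Finset.sum_Ico_eq_sum_range]
  have hnk : n + 1 - k = (n - k) + 1 := by omega
  rw [hnk, Efun, Finset.mul_sum]
  refine Finset.sum_congr rfl (fun j _ => ?_)
  have : k + j - k = j := by omega
  rw [this]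
  field_simp

lemma core_ineq (n : ℕ) :
    Real.exp 1 * ∑ m ∈ range n, (n:ℝ)^m / (m ! : ℝ)
      ≤ ∑ m ∈ range (n+1), ((n:ℝ)+1)^m / (m ! : ℝ) := by
  rw [B_expand, Finset.sum_range_succ]
  have hE0 : Efun (n - n) = 1 := by simp [Efun]
  rw [hE0, mul_one, Finset.mul_sum]
  have key : ∑ k ∈ range n, ((n:ℝ)^k / (k ! : ℝ) * Tfun (n-k)) ≤ (n:ℝ)^n / (n ! : ℝ) := by
    have hterm : ∀ k ∈ range n, (n:ℝ)^k / (k ! : ℝ) * Tfun (n-k)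
        ≤ (n:ℝ)^n / (n ! : ℝ) * Tfun (n-k) := fun k hk =>
      mul_le_mul_of_nonneg_right (coeff_le (Nat.le_of_lt (Finset.mem_range.mp hk))) (Tfun_nonneg _)
    calc ∑ k ∈ range n, ((n:ℝ)^k / (k ! : ℝ) * Tfun (n-k))
        ≤ ∑ k ∈ range n, ((n:ℝ)^n / (n ! : ℝ) * Tfun (n-k)) := Finset.sum_le_sum hterm
      _ = (n:ℝ)^n / (n ! : ℝ) * ∑ k ∈ range n, Tfun (n-k) := by rw [← Finset.mul_sum]
      _ = (n:ℝ)^n / (n ! : ℝ) * ∑ r ∈ range n, Tfun (r+1) := by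
          congr 1
          rw [← Finset.sum_range_reflect]
          refine Finset.sum_congr rfl (fun k hk => ?_)
          congr 1
          have := Finset.mem_range.mp hk
          omega
      _ ≤ (n:ℝ)^n / (n ! : ℝ) * 1 := by
          refine mul_le_mul_of_nonneg_left (Tsum_le_one n) ?_
          positivity
      _ = (n:ℝ)^n / (n ! : ℝ) := mul_one _
  have expand : ∀ k ∈ range n, Real.exp 1 * ((n:ℝ)^k / (k ! : ℝ))
      = (n:ℝ)^k / (k ! : ℝ) * Efun (n-k) + (n:ℝ)^k / (k ! : ℝ) * Tfun (n-k) := by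
    intro k _
    rw [Tfun]; ring
  rw [Finset.sum_congr rfl expand, Finset.sum_add_distrib]
  linarith [key]

/-! ### Measure-theoretic part -/

lemma poisson_singleton (r : ℝ≥0) (n : ℕ) :
    poissonMeasure r {n} = ENNReal.ofReal (Real.exp (-(r:ℝ)) * (r:ℝ)^n / (n ! : ℝ)) := by
  exact poissonMeasure_singleton r n

lemma pmfReal_nonneg (r : ℝ≥0) (n : ℕ) : 0 ≤ Real.exp (-(r:ℝ)) * (r:ℝ)^n / (n ! : ℝ) := by
  positivity

lemma conv_real (a b : ℝ≥0) (n : ℕ) :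
    ∑ k ∈ range (n+1), (Real.exp (-(a:ℝ)) * (a:ℝ)^k / (k ! : ℝ))
        * (Real.exp (-(b:ℝ)) * (b:ℝ)^(n-k) / (((n-k) !) : ℝ))
      = Real.exp (-((a+b : ℝ≥0):ℝ)) * ((a+b : ℝ≥0):ℝ)^n / (n ! : ℝ) := by
  push_cast
  rw [show -((a:ℝ) + b) = -a + -b by ring, Real.exp_add, add_pow]
  rw [Finset.mul_sum, Finset.sum_div]
  refine Finset.sum_congr rfl (fun k hk => ?_)
  have hkn : k ≤ n := Nat.lt_succ_iff.mp (Finset.mem_range.mp hk)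
  rw [Nat.cast_choose ℝ hkn]
  have h1 : (k ! : ℝ) ≠ 0 := by exact_mod_cast (Nat.factorial_pos k).ne'
  have h2 : (((n-k)!) : ℝ) ≠ 0 := by exact_mod_cast (Nat.factorial_pos (n-k)).ne'
  have h3 : (n ! : ℝ) ≠ 0 := by exact_mod_cast (Nat.factorial_pos n).ne'
  field_simp

lemma conv_poisson {Ω : Type*} [MeasureSpace Ω] [IsProbabilityMeasure (ℙ : Measure Ω)]
    {X Y : Ω → ℕ} (hX : Measurable X) (hY : Measurable Y)
    (hind : IndepFun X Y ℙ) (a b : ℝ≥0)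
    (hXd : Measure.map X ℙ = poissonMeasure a) (hYd : Measure.map Y ℙ = poissonMeasure b) :
    Measure.map (fun ω => X ω + Y ω) ℙ = poissonMeasure (a + b) := by
  apply MeasureTheory.Measure.ext_of_singleton
  intro n
  rw [Measure.map_apply (f := fun ω => X ω + Y ω) (hX.add hY) (measurableSet_singleton n)]
  have hset : ((fun ω => X ω + Y ω) ⁻¹' {n})
      = ⋃ k ∈ (range (n+1) : Finset ℕ), (X ⁻¹' {k} ∩ Y ⁻¹' {n - k}) := by
    ext ω
    simp only [Set.mem_preimage, Set.mem_singleton_iff, Set.mem_iUnion, Set.mem_inter_iff,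
      Finset.mem_range, Finset.mem_coe]
    constructor
    · intro h
      exact ⟨X ω, by omega, rfl, by omega⟩
    · rintro ⟨k, hk, h1, h2⟩
      omega
  rw [hset]
  rw [measure_biUnion_finset]
  · have hterm : ∀ k ∈ range (n+1), ℙ (X ⁻¹' {k} ∩ Y ⁻¹' {n - k})
        = ENNReal.ofReal ((Real.exp (-(a:ℝ)) * (a:ℝ)^k / (k ! : ℝ))
            * (Real.exp (-(b:ℝ)) * (b:ℝ)^(n-k) / (((n-k) !) : ℝ))) := by
      intro k _
      rw [hind.measure_inter_preimage_eq_mul _ _ (measurableSet_singleton k)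
        (measurableSet_singleton (n-k))]
      rw [← Measure.map_apply hX (measurableSet_singleton k),
        ← Measure.map_apply hY (measurableSet_singleton (n-k)), hXd, hYd,
        poisson_singleton, poisson_singleton,
        ← ENNReal.ofReal_mul (pmfReal_nonneg a k)]
    rw [Finset.sum_congr rfl hterm,
      ← ENNReal.ofReal_sum_of_nonneg
        (fun k _ => mul_nonneg (pmfReal_nonneg a k) (pmfReal_nonneg b (n-k))),
      conv_real, poisson_singleton]
  · intro i _ j _ hij
    simp only [Function.onFun]
    apply Set.disjoint_left.mpr
    rintro ω ⟨h1, h2⟩ ⟨h3, h4⟩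
    exact hij (by simp_all)
  · intro k _
    exact ((hX (measurableSet_singleton k)).inter (hY (measurableSet_singleton (n-k))))

lemma poisson_tail (r : ℝ≥0) (c : ℕ) :
    poissonMeasure r {m | c ≤ m}
      = 1 - ENNReal.ofReal (∑ m ∈ range c, Real.exp (-(r:ℝ)) * (r:ℝ)^m / (m ! : ℝ)) := by
  have hcompl : {m | c ≤ m} = (↑(range c) : Set ℕ)ᶜ := by
    ext m; simp [Nat.lt_iff_add_one_le, not_lt]
  rw [hcompl, measure_compl (by measurability) (measure_ne_top _ _), measure_univ]
  congr 1
  have hun : (↑(range c) : Set ℕ) = ⋃ m ∈ range c, {m} := by ext m; simp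
  rw [hun, measure_biUnion_finset]
  · rw [ENNReal.ofReal_sum_of_nonneg (fun m (_ : m ∈ range c) => pmfReal_nonneg r m)]
    exact Finset.sum_congr rfl (fun m _ => poisson_singleton r m)
  · intro i _ j _ hij
    simp [Function.onFun, Set.disjoint_singleton, hij]
  · exact fun m _ => measurableSet_singleton m

lemma mono_step (n : ℕ) :
    poissonMeasure (((n+1 : ℕ)) : ℝ≥0) {m | n+1 ≤ m}
      ≤ poissonMeasure ((n : ℕ) : ℝ≥0) {m | n ≤ m} := by
  rw [poisson_tail, poisson_tail]
  apply tsub_le_tsub_left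
  apply ENNReal.ofReal_le_ofReal
  have hcast : (((n:ℕ) : ℝ≥0) : ℝ) = (n:ℝ) := by push_cast; rfl
  have hcast2 : ((((n+1):ℕ) : ℝ≥0) : ℝ) = (n:ℝ)+1 := by push_cast; ring
  rw [hcast, hcast2]
  have h1 : Real.exp (-(n:ℝ)) = Real.exp (-((n:ℝ)+1)) * Real.exp 1 := by
    rw [← Real.exp_add]; ring_nf
  calc ∑ m ∈ range n, Real.exp (-(n:ℝ)) * (n:ℝ)^m / (m ! : ℝ)
      = Real.exp (-((n:ℝ)+1)) * (Real.exp 1 * ∑ m ∈ range n, (n:ℝ)^m / (m ! : ℝ)) := by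
        rw [Finset.mul_sum, Finset.mul_sum]
        exact Finset.sum_congr rfl (fun m _ => by rw [h1]; ring)
    _ ≤ Real.exp (-((n:ℝ)+1)) * ∑ m ∈ range (n+1), ((n:ℝ)+1)^m / (m ! : ℝ) := by
        exact mul_le_mul_of_nonneg_left (core_ineq n) (Real.exp_nonneg _)
    _ = ∑ m ∈ range (n+1), Real.exp (-((n:ℝ)+1)) * ((n:ℝ)+1)^m / (m ! : ℝ) := by
        rw [Finset.mul_sum]
        exact Finset.sum_congr rfl (fun m _ => by ring)

lemma mono_chain {a b : ℕ} (h : a ≤ b) :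
    poissonMeasure ((b : ℕ) : ℝ≥0) {m | b ≤ m} ≤ poissonMeasure ((a : ℕ) : ℝ≥0) {m | a ≤ m} := by
  induction b, h using Nat.le_induction with
  | base => exact le_rfl
  | succ b hab ih => exact le_trans (mono_step b) ih

end Aux

theorem stmt15 {Ω : Type*} [MeasureSpace Ω] [IsProbabilityMeasure (ℙ : Measure Ω)]
    (lam : ℕ → ℕ) (hpos : ∀ i, 0 < lam i)
    (hlam : ∀ k : ℕ, 1 ≤ k → lam (k + 1) ≤ ∑ i ∈ Finset.Icc 1 k, lam i)
    (X : ℕ → Ω → ℕ) (hmeas : ∀ i, Measurable (X i))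
    (hindep : iIndepFun X ℙ)
    (hdist : ∀ i, Measure.map (X i) ℙ = poissonMeasure (lam i : ℝ≥0)) :
    ∀ k : ℕ, 1 ≤ k →
      ℙ {ω | (∑ i ∈ Finset.Icc 1 (k + 1), lam i) ≤ ∑ i ∈ Finset.Icc 1 (k + 1), X i ω}
        ≤ ℙ {ω | (∑ i ∈ Finset.Icc 1 k, lam i) ≤ ∑ i ∈ Finset.Icc 1 k, X i ω} := by
  have hSmeas : ∀ k : ℕ, Measurable (fun ω => ∑ i ∈ Finset.Icc 1 k, X i ω) :=
    fun k => Finset.measurable_sum _ (fun i _ => hmeas i)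
  have hmap : ∀ k : ℕ, 1 ≤ k →
      Measure.map (fun ω => ∑ i ∈ Finset.Icc 1 k, X i ω) ℙ
        = poissonMeasure ((∑ i ∈ Finset.Icc 1 k, lam i : ℕ) : ℝ≥0) := by
    intro k hk
    induction k, hk using Nat.le_induction with
    | base =>
      simp only [Finset.Icc_self, Finset.sum_singleton]
      exact hdist 1
    | succ k hk ih =>
      have hnotmem : (k+1) ∉ Finset.Icc 1 k := by simp
      have heq : Finset.Icc 1 (k+1) = insert (k+1) (Finset.Icc 1 k) := by
        ext x; simp; omega
      have hind1 : IndepFun (fun ω => ∑ j ∈ Finset.Icc 1 k, X j ω) (X (k+1)) ℙ := by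
        have h := hindep.indepFun_finsetSum_of_notMem hmeas hnotmem
        have hfe : (∑ j ∈ Finset.Icc 1 k, X j) = fun ω => ∑ j ∈ Finset.Icc 1 k, X j ω := by
          ext ω; simp
        rwa [hfe] at h
      have hfun : (fun ω => ∑ i ∈ Finset.Icc 1 (k+1), X i ω)
          = fun ω => X (k+1) ω + ∑ i ∈ Finset.Icc 1 k, X i ω := by
        ext ω; rw [heq, Finset.sum_insert hnotmem]
      have hrate : ((∑ i ∈ Finset.Icc 1 (k+1), lam i : ℕ) : ℝ≥0)
          = ((lam (k+1) : ℕ) : ℝ≥0) + ((∑ i ∈ Finset.Icc 1 k, lam i : ℕ) : ℝ≥0) := by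
        rw [heq, Finset.sum_insert hnotmem]; push_cast; ring
      rw [hfun, hrate]
      exact conv_poisson (hmeas (k+1)) (hSmeas k) hind1.symm _ _ (hdist (k+1)) ih
  have hprob : ∀ k : ℕ, 1 ≤ k → ∀ c : ℕ,
      ℙ {ω | c ≤ ∑ i ∈ Finset.Icc 1 k, X i ω}
        = poissonMeasure ((∑ i ∈ Finset.Icc 1 k, lam i : ℕ) : ℝ≥0) {m | c ≤ m} := by
    intro k hk c
    rw [← hmap k hk, Measure.map_apply (hSmeas k) (by trivial)]
    rfl
  intro k hk
  rw [hprob k hk, hprob (k+1) (le_trans hk (Nat.le_succ k))]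
  apply mono_chain
  apply Finset.sum_le_sum_of_subset
  exact Finset.Icc_subset_Icc_right (Nat.le_succ _)
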